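/- Let f : X → ℝ be differentiable on a Euclidean space X, B = graph(f) ⊂ X × ℝ, A = X × {0}, and suppose V(y,ρ) = F(y) + ρ²/2 with ∇F(y) = (f(y)/‖∇f(y)‖²)∇f(y) wherever ∇f(y) ≠ 0. Let x = (y,ρ) with f(y) ≠ 0 and ∇f(y) ≠ 0 for the nearest point. If P_B x = (q, f(q)) with ∇f(q) ≠ 0 and the projection characterization y = q + (f(q) − ρ)∇f(q) holds, then ⟨x − P_B x, ∇V(P_B x)⟩ = 0; consequently for all μ ∈ ℝ, P_B x − μ∇V(P_B x) lies in the perpendicular bisector H(x, R_B x). -/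

import Mathlib

open scoped RealInnerProductSpace

/-- For `B = graph f`, if `P_B x = (q, f(q))` with the projection characterization
`y = q + (f(q) - ρ)∇f(q)`, then `⟪x - P_B x, ∇V(P_B x)⟫ = 0`, and hence for all `μ`,
`P_B x - μ∇V(P_B x)` lies in the perpendicular bisector `H(x, R_B x)`. -/
theorem graph_projection_gradient_orthogonal
    (X : Type*) [NormedAddCommGroup X] [InnerProductSpace ℝ X] [FiniteDimensional ℝ X]
    (f F : X → ℝ) (hf : Differentiable ℝ f) (hF : Differentiable ℝ F)
    (hgradF : ∀ w, gradient f w ≠ 0 →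
      gradient F w = (f w / ‖gradient f w‖ ^ 2) • gradient f w)
    (V : WithLp 2 (X × ℝ) → ℝ)
    (hV : ∀ w : X, ∀ ρ : ℝ,
      V ((WithLp.equiv 2 (X × ℝ)).symm (w, ρ)) = F w + ρ ^ 2 / 2)
    (y : X) (ρ : ℝ) (x : WithLp 2 (X × ℝ))
    (hx : x = (WithLp.equiv 2 (X × ℝ)).symm (y, ρ))
    (hfy : f y ≠ 0)
    (q : X) (hq : gradient f q ≠ 0)
    (hproj : y = q + (f q - ρ) • gradient f q)
    (PBx : WithLp 2 (X × ℝ))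
    (hPBx : PBx = (WithLp.equiv 2 (X × ℝ)).symm (q, f q))
    (hgradV : gradient V PBx =
      (WithLp.equiv 2 (X × ℝ)).symm ((f q / ‖gradient f q‖ ^ 2) • gradient f q, f q)) :
    ⟪x - PBx, gradient V PBx⟫ = 0 ∧
      ∀ μ : ℝ, ‖(PBx - μ • gradient V PBx) - x‖ =
        ‖(PBx - μ • gradient V PBx) - ((2:ℝ) • PBx - x)‖ := by
  have key : ⟪x - PBx, gradient V PBx⟫ = 0 := by
    rw [hgradV, hx, hPBx, hproj]
    have hsub : ((WithLp.equiv 2 (X × ℝ)).symm (q + (f q - ρ) • gradient f q, ρ))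
        - ((WithLp.equiv 2 (X × ℝ)).symm (q, f q))
        = (WithLp.equiv 2 (X × ℝ)).symm ((f q - ρ) • gradient f q, ρ - f q) := by
      apply (WithLp.equiv 2 (X × ℝ)).injective
      ext <;> simp <;> ring
    rw [hsub]
    have : ⟪((WithLp.equiv 2 (X × ℝ)).symm ((f q - ρ) • gradient f q, ρ - f q)),
        ((WithLp.equiv 2 (X × ℝ)).symm ((f q / ‖gradient f q‖ ^ 2) • gradient f q, f q))⟫
        = (f q - ρ) * ((f q / ‖gradient f q‖ ^ 2) * ⟪gradient f q, gradient f q⟫)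
          + (ρ - f q) * f q := by
      generalize gradient f q = v
      simp [WithLp.prod_inner_apply, real_inner_smul_left, real_inner_smul_right,
        RCLike.inner_apply, mul_comm]
      ring
    rw [this, real_inner_self_eq_norm_sq]
    have hng : ‖gradient f q‖ ^ 2 ≠ 0 := pow_ne_zero _ (norm_ne_zero_iff.mpr hq)
    field_simp
    ring
  refine ⟨key, fun μ => ?_⟩
  set g := gradient V PBx with hg
  have h1 : (PBx - μ • g) - x = (PBx - x) - μ • g := by abel
  have h2 : (PBx - μ • g) - ((2:ℝ) • PBx - x) = -((PBx - x) + μ • g) := by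
    rw [two_smul]; abel
  rw [h1, h2, norm_neg]
  have horth : ⟪PBx - x, μ • g⟫ = 0 := by
    rw [real_inner_smul_right]
    have : ⟪PBx - x, g⟫ = 0 := by
      rw [show PBx - x = -(x - PBx) by abel, inner_neg_left, key, neg_zero]
    rw [this, mul_zero]
  rw [← real_inner_self_eq_norm_sq] at *
  have e1 := norm_sub_sq_real (PBx - x) (μ • g)
  have e2 := norm_add_sq_real (PBx - x) (μ • g)
  have : ‖(PBx - x) - μ • g‖ ^ 2 = ‖(PBx - x) + μ • g‖ ^ 2 := by
    rw [e1, e2, horth]; ring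
  nlinarith [norm_nonneg ((PBx - x) - μ • g), norm_nonneg ((PBx - x) + μ • g),
    ‹‖(PBx - x) - μ • g‖ ^ 2 = ‖(PBx - x) + μ • g‖ ^ 2›]
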